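/- arXiv:1708.02570 — 9 statements merged into one kernel-verified Lean document; each statement's English description precedes it below -/
import Mathlib

section
/- For all m n : ℕ, define for each monotone map f : Fin m → Fin n the map f^∨ : Fin (n+1) → Fin (m+1) by (f^∨ j : ℕ) = Fintype.card {i : Fin m // (f i : ℕ) < (j : ℕ)}. Then: (i) f^∨ is monotone and endpoint-preserving (f^∨ 0 = 0 and f^∨ (Fin.last n) = Fin.last m); (ii) the assignment f ↦ f^∨ is a bijection from monotone maps Fin m → Fin n onto endpoint-preserving monotone maps Fin (n+1) → Fin (m+1); (iii) (id : Fin n → Fin n)^∨ = id; (iv) for monotone f₁ : Fin m → Fin n and f₂ : Fin n → Fin p, (f₂ ∘ f₁)^∨ = f₁^∨ ∘ f₂^∨. (Joyal duality: the opposite of the generic part of the topologist's simplex category is isomorphic to the algebraist's simplex category.) -/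
def fDual {m n : ℕ} (f : Fin m → Fin n) (j : Fin (n + 1)) : Fin (m + 1) :=
  ⟨Fintype.card {i : Fin m // (f i : ℕ) < (j : ℕ)}, by
    have h := Fintype.card_subtype_le (fun i : Fin m => (f i : ℕ) < (j : ℕ))
    simp only [Fintype.card_fin] at h
    omega⟩

lemma lowerCard {m : ℕ} (P : Fin m → Prop) [DecidablePred P]
    (hP : ∀ i i' : Fin m, i' ≤ i → P i → P i') (i : Fin m) :
    ((i : ℕ) < Fintype.card {x // P x} ↔ P i) := by
  rw [Fintype.card_subtype]
  constructor
  · intro h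
    by_contra hPi
    have hsub : Finset.filter (fun x => P x) Finset.univ ⊆ Finset.Iio i := by
      intro x hx
      simp only [Finset.mem_filter] at hx
      simp only [Finset.mem_Iio]
      by_contra hxi
      exact hPi (hP x i (le_of_not_gt hxi) hx.2)
    have h2 := Finset.card_le_card hsub
    rw [Fin.card_Iio] at h2
    omega
  · intro hPi
    have hsub : Finset.Iic i ⊆ Finset.filter (fun x => P x) Finset.univ := by
      intro x hx
      simp only [Finset.mem_Iic] at hx
      simp only [Finset.mem_filter, Finset.mem_univ, true_and]
      exact hP i x hx hPi
    have h2 := Finset.card_le_card hsub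
    rw [Fin.card_Iic] at h2
    omega

lemma lt_fDual {m n : ℕ} {f : Fin m → Fin n} (hf : Monotone f) (j : Fin (n + 1)) (i : Fin m) :
    ((i : ℕ) < (fDual f j : ℕ) ↔ (f i : ℕ) < (j : ℕ)) :=
  lowerCard (fun i => (f i : ℕ) < (j : ℕ))
    (fun a b hle hb => lt_of_le_of_lt (by exact_mod_cast hf hle) hb) i

lemma finExt {m : ℕ} (c c' : Fin (m + 1))
    (h : ∀ i : Fin m, ((i : ℕ) < (c : ℕ) ↔ (i : ℕ) < (c' : ℕ))) : c = c' := by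
  have hc := c.isLt
  have hc' := c'.isLt
  apply Fin.ext
  by_contra hne
  rcases Nat.lt_or_ge (c : ℕ) (c' : ℕ) with hlt | hge
  · have := (h ⟨(c : ℕ), by omega⟩).2 hlt
    simp at this
  · have hlt : (c' : ℕ) < (c : ℕ) := by omega
    have := (h ⟨(c' : ℕ), by omega⟩).1 hlt
    simp at this

/-- Joyal duality: the opposite of the generic (endpoint-preserving) part of the
topologist's simplex category is isomorphic to the algebraist's simplex category. -/
theorem joyal_duality (m n p : ℕ) :
    (∀ f : Fin m → Fin n, Monotone f →
      Monotone (fDual f) ∧ fDual f 0 = 0 ∧ fDual f (Fin.last n) = Fin.last m) ∧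
    (∀ f g : Fin m → Fin n, Monotone f → Monotone g → fDual f = fDual g → f = g) ∧
    (∀ h : Fin (n + 1) → Fin (m + 1), Monotone h → h 0 = 0 → h (Fin.last n) = Fin.last m →
      ∃ f : Fin m → Fin n, Monotone f ∧ fDual f = h) ∧
    (fDual (id : Fin n → Fin n) = id) ∧
    (∀ (f₁ : Fin m → Fin n) (f₂ : Fin n → Fin p), Monotone f₁ → Monotone f₂ →
      fDual (f₂ ∘ f₁) = fDual f₁ ∘ fDual f₂) := by
  refine ⟨?_, ?_, ?_, ?_, ?_⟩
  · intro f hf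
    refine ⟨?_, ?_, ?_⟩
    · intro j j' hj
      rw [Fin.le_iff_val_le_val]
      show Fintype.card {i : Fin m // (f i : ℕ) < (j : ℕ)} ≤ Fintype.card {i : Fin m // (f i : ℕ) < (j' : ℕ)}
      apply Fintype.card_subtype_mono
      intro i hi
      exact lt_of_lt_of_le hi (by exact_mod_cast hj)
    · apply Fin.ext
      show Fintype.card {i : Fin m // (f i : ℕ) < ((0 : Fin (n + 1)) : ℕ)} = (0 : ℕ)
      simp
    · apply Fin.ext
      show Fintype.card {i : Fin m // (f i : ℕ) < ((Fin.last n : Fin (n + 1)) : ℕ)} = m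
      rw [Fintype.card_subtype]
      rw [Finset.filter_true_of_mem (fun i _ => by simp [(f i).isLt])]
      simp
  · intro f g hf hg hfg
    funext i
    apply Fin.ext
    by_contra hne
    rcases Nat.lt_or_ge (f i : ℕ) (g i : ℕ) with hlt | hge
    · have h1 : (f i : ℕ) < (((g i).castSucc : Fin (n+1)) : ℕ) := by simpa using hlt
      have h2 := (lt_fDual hf ((g i).castSucc) i).2 h1
      rw [hfg] at h2
      have h3 := (lt_fDual hg ((g i).castSucc) i).1 h2
      simp at h3
    · have hlt : (g i : ℕ) < (f i : ℕ) := by omega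
      have h1 : (g i : ℕ) < (((f i).castSucc : Fin (n+1)) : ℕ) := by simpa using hlt
      have h2 := (lt_fDual hg ((f i).castSucc) i).2 h1
      rw [← hfg] at h2
      have h3 := (lt_fDual hf ((f i).castSucc) i).1 h2
      simp at h3
  · intro h hmono h0 hlast
    -- construct f
    set S : Fin m → Finset (Fin (n + 1)) :=
      fun i => Finset.filter (fun j : Fin (n + 1) => (h j : ℕ) ≤ (i : ℕ)) Finset.univ with hS
    have hmemS : ∀ i j, j ∈ S i ↔ (h j : ℕ) ≤ (i : ℕ) := by
      intro i j; simp [hS]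
    have h0S : ∀ i, (0 : Fin (n+1)) ∈ S i := by
      intro i; rw [hmemS]; simp [h0]
    have hk : ∀ i : Fin m, (S i).sup (fun j => (j : ℕ)) < n := by
      intro i
      have h0n : 0 < n := by
        by_contra hn
        have hn0 : n = 0 := by omega
        subst hn0
        have : h 0 = Fin.last m := by rw [← hlast]; rfl
        have hm : (0 : ℕ) = m := by
          have := congrArg Fin.val this
          rw [h0] at this
          simpa using this
        have := i.isLt
        omega
      rw [Finset.sup_lt_iff (by simpa using h0n)]
      intro j hj
      rw [hmemS] at hj
      by_contra hjn
      have hjl : j = Fin.last n := by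
        apply Fin.ext
        have := j.isLt
        simp only [Fin.val_last]
        omega
      rw [hjl, hlast] at hj
      simp [Fin.val_last] at hj
      omega
    set f : Fin m → Fin n := fun i => ⟨(S i).sup (fun j => (j : ℕ)), hk i⟩ with hfdef
    have hfmono : Monotone f := by
      intro i i' hii
      rw [hfdef]
      simp only [Fin.mk_le_mk]
      apply Finset.sup_mono
      intro j hj
      rw [hmemS] at hj ⊢
      exact le_trans hj (by exact_mod_cast hii)
    have hkey : ∀ (i : Fin m) (j : Fin (n+1)), (f i : ℕ) < (j : ℕ) ↔ (i : ℕ) < (h j : ℕ) := by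
      intro i j
      constructor
      · intro hlt
        by_contra hih
        have hjS : j ∈ S i := by rw [hmemS]; omega
        have := Finset.le_sup (f := fun j : Fin (n+1) => (j : ℕ)) hjS
        show False
        have : (j : ℕ) ≤ (f i : ℕ) := this
        omega
      · intro hih
        have hj0 : 0 < (j : ℕ) := by
          by_contra hj0
          have : j = 0 := by apply Fin.ext; simp only [Fin.val_zero]; omega
          rw [this, h0] at hih
          simp at hih
        show (S i).sup (fun j => (j : ℕ)) < (j : ℕ)
        rw [Finset.sup_lt_iff (by simpa using hj0)]
        intro j' hj'
        rw [hmemS] at hj'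
        by_contra hjj
        have : (h j : ℕ) ≤ (h j' : ℕ) := by
          have := hmono (show j ≤ j' from by rw [Fin.le_iff_val_le_val]; omega)
          exact_mod_cast this
        omega
    refine ⟨f, hfmono, ?_⟩
    funext j
    apply finExt
    intro i
    rw [lt_fDual hfmono j i, hkey i j]
  · funext j
    apply finExt
    intro i
    rw [lt_fDual monotone_id j i]
    simp
  · intro f₁ f₂ hf₁ hf₂
    funext j
    apply finExt
    intro i
    rw [lt_fDual (hf₂.comp hf₁) j i]
    show _ ↔ (i : ℕ) < (fDual f₁ (fDual f₂ j) : ℕ)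
    rw [lt_fDual hf₁ (fDual f₂ j) i, lt_fDual hf₂ j (f₁ i)]
    rfl
end

section
/- Under the duality f ↦ f^∨, where for monotone f : Fin m → Fin n one sets (f^∨ j : ℕ) = Fintype.card {i : Fin m // (f i : ℕ) < (j : ℕ)}, the generators correspond as follows: (i) for n : ℕ and k : Fin (n+1), the coface d^k : Fin n → Fin (n+1) satisfies (d^k)^∨ = s^k : Fin (n+2) → Fin (n+1), the codegeneracy with the same pivot value; (ii) for n : ℕ and k : Fin n, the codegeneracy s^k : Fin (n+1) → Fin n satisfies (s^k)^∨ = d^{k+1} : Fin (n+1) → Fin (n+2), the coface whose pivot has value (k : ℕ) + 1. -/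
/-- The coface map `d^k : Fin m → Fin (m+1)` with pivot of value `k`:
`x ↦ x` if `x < k`, and `x ↦ x + 1` otherwise. -/
def coface {m : ℕ} (k : ℕ) (x : Fin m) : Fin (m + 1) :=
  if (x : ℕ) < k then ⟨(x : ℕ), by have := x.isLt; omega⟩
  else ⟨(x : ℕ) + 1, by have := x.isLt; omega⟩

/-- The codegeneracy map `s^k : Fin (m+2) → Fin (m+1)` with pivot `k : Fin (m+1)`:
`y ↦ y` if `y ≤ k`, and `y ↦ y - 1` otherwise. -/
def codeg {m : ℕ} (k : Fin (m + 1)) (y : Fin (m + 2)) : Fin (m + 1) :=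
  if h : (y : ℕ) ≤ (k : ℕ) then ⟨(y : ℕ), by have := k.isLt; omega⟩
  else ⟨(y : ℕ) - 1, by have := y.isLt; omega⟩

lemma card_lt_aux (m t : ℕ) (h : t ≤ m) :
    Fintype.card {i : Fin m // (i : ℕ) < t} = t := by
  rw [Fintype.card_eq.mpr ⟨⟨fun x => (⟨x.1.1, x.2⟩ : Fin t),
    fun y => ⟨⟨y.1, y.2.trans_le h⟩, y.2⟩,
    fun x => by ext; rfl, fun y => by ext; rfl⟩⟩, Fintype.card_fin]

lemma card_eq_of_iff {m : ℕ} (p : Fin m → Prop) [DecidablePred p] (t : ℕ) (h : t ≤ m)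
    (hp : ∀ i : Fin m, p i ↔ (i : ℕ) < t) :
    Fintype.card {i : Fin m // p i} = t := by
  rw [Fintype.card_congr (Equiv.subtypeEquivRight hp), card_lt_aux m t h]

/-- Under Joyal duality, cofaces correspond to codegeneracies (with the same
pivot value), and codegeneracies correspond to inner cofaces (whose pivot has
value one more). -/
theorem joyal_duality_on_generators (n : ℕ) :
    (∀ k : Fin (n + 1), fDual (coface (k : ℕ) : Fin n → Fin (n + 1)) = codeg k) ∧
    (∀ k : Fin (n + 1), fDual (codeg k : Fin (n + 2) → Fin (n + 1)) =
      (coface ((k : ℕ) + 1) : Fin (n + 2) → Fin (n + 3))) := by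
  constructor
  · intro k
    funext j
    apply Fin.ext
    have hk := k.isLt
    have hj := j.isLt
    show Fintype.card {i : Fin n // ((coface (k : ℕ) i : Fin (n + 1)) : ℕ) < (j : ℕ)} = _
    rcases le_or_gt (j : ℕ) (k : ℕ) with h | h
    · rw [card_eq_of_iff _ (j : ℕ) (by omega)
        (fun i => by simp only [coface]; split <;> simp <;> omega)]
      simp [codeg, h]
    · rw [card_eq_of_iff _ ((j : ℕ) - 1) (by omega)
        (fun i => by simp only [coface]; split <;> simp <;> omega)]
      simp only [codeg]; split <;> simp <;> omega
  · intro k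
    funext j
    apply Fin.ext
    have hk := k.isLt
    have hj := j.isLt
    show Fintype.card {i : Fin (n + 2) // ((codeg k i : Fin (n + 1)) : ℕ) < (j : ℕ)} = _
    rcases le_or_gt (j : ℕ) (k : ℕ) with h | h
    · rw [card_eq_of_iff _ (j : ℕ) (by omega)
        (fun i => by simp only [codeg]; split <;> simp <;> omega)]
      simp only [coface]; split <;> simp <;> omega
    · rw [card_eq_of_iff _ ((j : ℕ) + 1) (by omega)
        (fun i => by simp only [codeg]; split <;> simp <;> omega)]
      simp only [coface]; split <;> simp <;> omega
end

section
/- Fix n : ℕ and k : Fin (n+1). Write d₁ : Fin n → Fin (n+1) for the coface with pivot k, d₂ : Fin (n+1) → Fin (n+2) for the coface whose pivot has value (k : ℕ), and s : Fin (n+2) → Fin (n+1) for the codegeneracy with pivot k. Then: (i) s ∘ d₂ ∘ d₁ = d₁; (ii) for every c : ℕ and all monotone maps u : Fin c → Fin (n+2) and v : Fin c → Fin n with s ∘ u = d₁ ∘ v, one has u = d₂ ∘ d₁ ∘ v. Consequently the square with top row d₂ ∘ d₁ : Fin n → Fin (n+2), bottom row d₁ : Fin n → Fin (n+1), left leg the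 identity of Fin n, and right leg s, is a pullback in the category of finite ordinals and monotone maps. -/
lemma coface_val {m : ℕ} (k : ℕ) (x : Fin m) :
    ((coface k x : Fin (m + 1)) : ℕ) = if (x : ℕ) < k then (x : ℕ) else (x : ℕ) + 1 := by
  unfold coface; split_ifs <;> rfl

lemma codeg_val {m : ℕ} (k : Fin (m + 1)) (y : Fin (m + 2)) :
    ((codeg k y : Fin (m + 1)) : ℕ) = if (y : ℕ) ≤ (k : ℕ) then (y : ℕ) else (y : ℕ) - 1 := by
  unfold codeg; split_ifs <;> rfl

/-- The square with top `d₂ ∘ d₁`, bottom `d₁`, left leg the identity and right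
leg the codegeneracy `s` is a pullback in the category of finite ordinals and
monotone maps (cf. Lemma `somepbk1`). -/
theorem codeg_coface_pullback (n : ℕ) (k : Fin (n + 1)) :
    -- d₁ := coface (k : ℕ) : Fin n → Fin (n+1)
    -- d₂ := coface (k : ℕ) : Fin (n+1) → Fin (n+2)
    -- s  := codeg k : Fin (n+2) → Fin (n+1)
    ((codeg k) ∘ (coface (k : ℕ) : Fin (n + 1) → Fin (n + 2)) ∘
        (coface (k : ℕ) : Fin n → Fin (n + 1)) = (coface (k : ℕ) : Fin n → Fin (n + 1))) ∧
    (∀ (c : ℕ) (u : Fin c → Fin (n + 2)) (v : Fin c → Fin n), Monotone u → Monotone v →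
      (codeg k) ∘ u = (coface (k : ℕ)) ∘ v →
      u = (coface (k : ℕ) : Fin (n + 1) → Fin (n + 2)) ∘ (coface (k : ℕ)) ∘ v) ∧
    (∀ (c : ℕ) (u : Fin c → Fin (n + 2)) (v : Fin c → Fin n), Monotone u → Monotone v →
      (codeg k) ∘ u = (coface (k : ℕ)) ∘ v →
      ∃! w : Fin c → Fin n, Monotone w ∧
        ((coface (k : ℕ) : Fin (n + 1) → Fin (n + 2)) ∘ (coface (k : ℕ))) ∘ w = u ∧
        id ∘ w = v) := by

  have key : ∀ (c : ℕ) (u : Fin c → Fin (n + 2)) (v : Fin c → Fin n),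
      (codeg k) ∘ u = (coface (k : ℕ)) ∘ v →
      u = (coface (k : ℕ) : Fin (n + 1) → Fin (n + 2)) ∘ (coface (k : ℕ)) ∘ v := by
    intro c u v h
    funext a
    have ha := congrFun h a
    simp only [Function.comp] at ha ⊢
    have hval : ((codeg k (u a)) : ℕ) = ((coface (k : ℕ) (v a)) : ℕ) := by rw [ha]
    have hu := (u a).isLt; have hv := (v a).isLt; have hk := k.isLt
    apply Fin.ext
    simp only [coface_val, codeg_val] at hval ⊢
    split_ifs at hval ⊢ <;> omega
  refine ⟨?_, fun c u v _ _ h => key c u v h, ?_⟩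
  · funext x
    have hx := x.isLt; have hk := k.isLt
    simp only [Function.comp]
    apply Fin.ext
    simp only [coface_val, codeg_val]
    split_ifs <;> omega
  · intro c u v hu hv h
    refine ⟨v, ⟨hv, ?_, rfl⟩, ?_⟩
    · exact (key c u v h).symm
    · rintro w ⟨-, -, hw2⟩
      simpa using hw2
end

section
/- Let f : Fin n → Fin k be monotone and a b : ℕ. Let g = id_a + f + id_b : Fin (a+n+b) → Fin (a+k+b), and let j : Fin n → Fin (a+n+b) and i : Fin k → Fin (a+k+b) be the middle inclusions x ↦ a + x. Then g ∘ j = i ∘ f, and for every c : ℕ and all monotone maps u : Fin c → Fin (a+n+b) and v : Fin c → Fin k with g ∘ u = i ∘ v, there exists a unique monotone w : Fin c → Fin n with j ∘ w = u and f ∘ w = v. (Identity-extension squares in the category of finite ordinals are pullbacks.) -/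
/-- The block sum `id_a + f + id_b : Fin (a+n+b) → Fin (a+k+b)` of a monotone
map `f : Fin n → Fin k` with identities: it sends `x` to `x` if `x < a`, to
`a + f (x - a)` if `a ≤ x < a + n`, and to `x - n + k` if `a + n ≤ x`. -/
def blockSum {n k : ℕ} (f : Fin n → Fin k) (a b : ℕ) (x : Fin (a + n + b)) :
    Fin (a + k + b) :=
  if h₁ : (x : ℕ) < a then ⟨(x : ℕ), by omega⟩
  else if h₂ : (x : ℕ) < a + n then
    ⟨a + (f ⟨(x : ℕ) - a, by omega⟩ : ℕ), by
      have := (f ⟨(x : ℕ) - a, by omega⟩).isLt; omega⟩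
  else ⟨(x : ℕ) - n + k, by have := x.isLt; omega⟩

/-- The middle inclusion `Fin n → Fin (a+n+b)`, `x ↦ a + x` (a convex map). -/
def mid (a n b : ℕ) (x : Fin n) : Fin (a + n + b) :=
  ⟨a + (x : ℕ), by have := x.isLt; omega⟩

/-- Identity-extension squares in the category of finite ordinals and monotone
maps are pullbacks. -/
theorem identity_extension_square_is_pullback {n k : ℕ} (f : Fin n → Fin k)
    (hf : Monotone f) (a b : ℕ) :
    (blockSum f a b ∘ mid a n b = mid a k b ∘ f) ∧
    (∀ (c : ℕ) (u : Fin c → Fin (a + n + b)) (v : Fin c → Fin k),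
      Monotone u → Monotone v → blockSum f a b ∘ u = mid a k b ∘ v →
      ∃! w : Fin c → Fin n, Monotone w ∧ mid a n b ∘ w = u ∧ f ∘ w = v) := by
  constructor
  · funext x
    simp only [Function.comp_apply, blockSum, mid]
    have hx := x.isLt
    split_ifs with h1 h2
    · exact absurd h1 (by omega)
    have he : (⟨a + (x : ℕ) - a, by omega⟩ : Fin n) = x := by ext; simp
    simp only [he]
    simp [h1, show a + (x : ℕ) < a + n by omega]
  · intro c u v hu hv hcomm
    -- key: for each x, a ≤ u x < a + n and f (u x - a) = v x
    have key : ∀ x : Fin c, ∃ h : a ≤ (u x : ℕ) ∧ (u x : ℕ) < a + n,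
        f ⟨(u x : ℕ) - a, by omega⟩ = v x := by
      intro x
      have h := congrFun hcomm x
      simp only [Function.comp_apply, blockSum, mid] at h
      by_cases h₁ : (u x : ℕ) < a
      · rw [dif_pos h₁] at h
        have := congrArg Fin.val h
        simp at this; omega
      · by_cases h₂ : (u x : ℕ) < a + n
        · rw [dif_neg h₁, dif_pos h₂] at h
          have := congrArg Fin.val h
          simp at this
          exact ⟨⟨by omega, h₂⟩, Fin.ext this⟩
        · rw [dif_neg h₁, dif_neg h₂] at h
          have := congrArg Fin.val h
          have hvx := (v x).isLt
          have hux := (u x).isLt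
          simp at this; omega
    refine ⟨fun x => ⟨(u x : ℕ) - a, by obtain ⟨⟨h1, h2⟩, _⟩ := key x; omega⟩,
      ⟨?_, ?_, ?_⟩, ?_⟩
    · intro x y hxy
      have h1 := hu hxy
      simp only [Fin.le_def, Fin.mk_le_mk] at h1 ⊢
      omega
    · funext x
      obtain ⟨⟨h1, h2⟩, _⟩ := key x
      simp only [Function.comp_apply, mid]
      ext; simp; omega
    · funext x
      obtain ⟨⟨h1, h2⟩, h3⟩ := key x
      exact h3
    · intro w ⟨hwm, hw1, hw2⟩
      funext x
      have := congrFun hw1 x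
      simp only [Function.comp_apply, mid] at this
      have := congrArg Fin.val this
      ext
      simp at this ⊢
      omega
end

section
/- Let h : Fin n' → Fin k' be any monotone map and let i : Fin k → Fin k' be a convex map (so (i x : ℕ) = a + x for some a with a + k ≤ k'). Then there exist m : ℕ, a convex map j : Fin m → Fin n', and a monotone map f : Fin m → Fin k with i ∘ f = h ∘ j, such that the square is a pullback: for every c : ℕ and all monotone p : Fin c → Fin n' and q : Fin c → Fin k with h ∘ p = i ∘ q, there exists a unique monotone r : Fin c → Fin m with j ∘ r = p and f ∘ r = q. (Convex maps in the category of finite ordinals admit pullbacks along arbitrary maps, and the pulled-back map is again convex.) -/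
/-- A monotone map `j : Fin k → Fin n` is convex (distance-preserving) iff it
is of the form `x ↦ a + x` for some `a` with `a + k ≤ n`. -/
def IsConvexMap {k n : ℕ} (j : Fin k → Fin n) : Prop :=
  ∃ a : ℕ, a + k ≤ n ∧ ∀ x : Fin k, (j x : ℕ) = a + (x : ℕ)

/-- Convex maps in the category of finite ordinals and monotone maps admit
pullbacks along arbitrary maps, and the pulled-back map is again convex. -/
theorem convex_pullback_exists {n' k k' : ℕ} (h : Fin n' → Fin k')
    (hmono : Monotone h) (i : Fin k → Fin k') (hi : IsConvexMap i) :
    ∃ (m : ℕ) (j : Fin m → Fin n') (f : Fin m → Fin k),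
      IsConvexMap j ∧ Monotone f ∧ i ∘ f = h ∘ j ∧
      ∀ (c : ℕ) (p : Fin c → Fin n') (q : Fin c → Fin k),
        Monotone p → Monotone q → h ∘ p = i ∘ q →
        ∃! r : Fin c → Fin m, Monotone r ∧ j ∘ r = p ∧ f ∘ r = q := by
  classical
  obtain ⟨a, hak, hia⟩ := hi
  set T : Finset (Fin n') :=
    Finset.univ.filter (fun y => a ≤ (h y : ℕ) ∧ (h y : ℕ) < a + k) with hT
  have memT : ∀ y : Fin n', y ∈ T ↔ (a ≤ (h y : ℕ) ∧ (h y : ℕ) < a + k) := by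
    intro y; simp [hT]
  have key : ∀ (c : ℕ) (p : Fin c → Fin n') (q : Fin c → Fin k),
      h ∘ p = i ∘ q → ∀ x : Fin c, (h (p x) : ℕ) = a + (q x : ℕ) := by
    intro c p q hc x
    have := congrFun hc x
    simp only [Function.comp_apply] at this
    rw [this, hia]
  by_cases hne : T.Nonempty
  · set b := T.min' hne with hb
    set B := T.max' hne with hB
    have hbT := (memT b).mp (T.min'_mem hne)
    have hBT := (memT B).mp (T.max'_mem hne)
    have hbB : (b : ℕ) ≤ (B : ℕ) := (show b ≤ B from T.min'_le B (T.max'_mem hne))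
    have hBn : (B : ℕ) < n' := B.isLt
    have hint : ∀ y : Fin n', (b : ℕ) ≤ (y : ℕ) → (y : ℕ) ≤ (B : ℕ) →
        a ≤ (h y : ℕ) ∧ (h y : ℕ) < a + k := by
      intro y h1 h2
      have e1 : h b ≤ h y := hmono (by exact h1)
      have e2 : h y ≤ h B := hmono (by exact h2)
      rw [Fin.le_def] at e1 e2
      omega
    set m := (B : ℕ) - (b : ℕ) + 1 with hm
    have hjlt : ∀ x : Fin m, (b : ℕ) + (x : ℕ) < n' := by
      intro x; have := x.2; omega
    set j : Fin m → Fin n' := fun x => ⟨(b : ℕ) + (x : ℕ), hjlt x⟩ with hj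
    have hjval : ∀ x : Fin m, (j x : ℕ) = (b : ℕ) + (x : ℕ) := fun x => rfl
    have hfprop : ∀ x : Fin m, a ≤ (h (j x) : ℕ) ∧ (h (j x) : ℕ) < a + k := by
      intro x
      refine hint (j x) ?_ ?_ <;> rw [hjval] <;> [omega; skip]
      have := x.2; omega
    set f : Fin m → Fin k := fun x => ⟨(h (j x) : ℕ) - a, by have := hfprop x; omega⟩ with hf
    have hjm : Monotone j := by
      intro x y hxy
      rw [Fin.le_def] at hxy ⊢
      simp only [hjval]; omega
    refine ⟨m, j, f, ⟨(b : ℕ), by omega, hjval⟩, ?_, ?_, ?_⟩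
    · intro x y hxy
      have := hmono (hjm hxy)
      rw [Fin.le_def] at this ⊢
      simp only [hf]
      omega
    · funext x
      simp only [Function.comp_apply]
      apply Fin.ext
      rw [hia]
      have := hfprop x
      simp only [hf]
      omega
    · intro c p q hp hq hcomm
      have hpq := key c p q hcomm
      have hpT : ∀ x : Fin c, (b : ℕ) ≤ (p x : ℕ) ∧ (p x : ℕ) ≤ (B : ℕ) := by
        intro x
        have h1 := hpq x
        have h2 := (q x).2
        have hmem : p x ∈ T := (memT _).mpr ⟨by omega, by omega⟩
        exact ⟨show b ≤ p x from T.min'_le _ hmem, show p x ≤ B from T.le_max' _ hmem⟩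
      have hrlt : ∀ x : Fin c, (p x : ℕ) - (b : ℕ) < m := by
        intro x; have := hpT x; omega
      refine ⟨fun x => ⟨(p x : ℕ) - (b : ℕ), hrlt x⟩, ⟨?_, ?_, ?_⟩, ?_⟩
      · intro x y hxy
        have := hp hxy
        rw [Fin.le_def] at this ⊢
        simp only
        omega
      · funext x
        simp only [Function.comp_apply]
        apply Fin.ext
        rw [hjval]
        have := hpT x
        simp only
        omega
      · funext x
        simp only [Function.comp_apply]
        apply Fin.ext
        simp only [hf]
        have e : (j ⟨(p x : ℕ) - (b : ℕ), hrlt x⟩ : ℕ) = (p x : ℕ) := by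
          rw [hjval]; have := hpT x; simp only; omega
        have e2 : h (j ⟨(p x : ℕ) - (b : ℕ), hrlt x⟩) = h (p x) := by
          congr 1; exact Fin.ext e
        rw [e2, hpq x]
        omega
      · rintro r' ⟨_, hjr', _⟩
        funext x
        apply Fin.ext
        have := congrFun hjr' x
        simp only [Function.comp_apply] at this
        have := congrArg Fin.val this
        rw [hjval] at this
        simp only
        omega
  · -- T is empty
    refine ⟨0, Fin.elim0, Fin.elim0, ⟨0, by omega, fun x => x.elim0⟩,
      fun x => x.elim0, funext fun x => x.elim0, ?_⟩
    intro c p q hp hq hcomm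
    have hc0 : c = 0 := by
      by_contra hc
      have x0 : Fin c := ⟨0, Nat.pos_of_ne_zero hc⟩
      have h1 := key c p q hcomm x0
      have h2 := (q x0).2
      exact hne ⟨p x0, (memT _).mpr ⟨by omega, by omega⟩⟩
    subst hc0
    refine ⟨Fin.elim0, ⟨fun x => x.elim0, funext fun x => x.elim0, funext fun x => x.elim0⟩,
      fun r' _ => funext fun x => x.elim0⟩
end

section
/- Let b₁ k b₂ : ℕ and let h : Fin n' → Fin (b₁ + k + b₂) be monotone. Then there exist unique natural numbers a₁, n, a₂ with a₁ + n + a₂ = n', and unique monotone maps g₁ : Fin a₁ → Fin b₁, f : Fin n → Fin k, and g₂ : Fin a₂ → Fin b₂, such that for all x: (h x : ℕ) = g₁ x when (x : ℕ) < a₁; (h x : ℕ) = b₁ + f(x − a₁) when a₁ ≤ x < a₁ + n; and (h x : ℕ) = b₁ + k + g₂(x − a₁ − n) when a₁ + n ≤ x. In other words, every monotone map into a three-block ordinal decomposes uniquely as a block sum g₁ + f + g₂, and the pullback of the middle inclusion Fin k → Fin (b₁+k+b₂) along h is the middle inclusion Fin n → Fin (a₁+n+a₂) together with f. -/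
open Finset

lemma lower_iff_lt_card {n' : ℕ} (P : Fin n' → Prop) [DecidablePred P]
    (hlow : ∀ x y : Fin n', x ≤ y → P y → P x) (x : Fin n') :
    P x ↔ (x : ℕ) < (univ.filter P).card := by
  constructor
  · intro hx
    have hsub : Finset.Iic x ⊆ univ.filter P := by
      intro y hy
      simp only [Finset.mem_Iic] at hy
      simp only [mem_filter, mem_univ, true_and]
      exact hlow y x hy hx
    have := Finset.card_le_card hsub
    rw [Fin.card_Iic] at this
    omega
  · intro hx
    by_contra hnx
    have hsub : univ.filter P ⊆ Finset.Iio x := by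
      intro y hy
      simp only [mem_filter, mem_univ, true_and] at hy
      simp only [Finset.mem_Iio]
      by_contra hyx
      push_neg at hyx
      exact hnx (hlow x y hyx hy)
    have := Finset.card_le_card hsub
    rw [Fin.card_Iio] at this
    omega

lemma card_eq_of_iff_s7 {n' m m' : ℕ} (hm : m ≤ n') (hm' : m' ≤ n')
    (H : ∀ x : Fin n', (x : ℕ) < m ↔ (x : ℕ) < m') : m = m' := by
  by_contra hne
  rcases Nat.lt_or_ge m m' with h1 | h1
  · have := (H ⟨m, lt_of_lt_of_le h1 hm'⟩).mpr h1
    simp at this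
  · rcases Nat.lt_or_ge m' m with h2 | h2
    · have := (H ⟨m', lt_of_lt_of_le h2 hm⟩).mp h2
      simp at this
    · omega


/-- Every monotone map into a three-block ordinal `Fin (b₁+k+b₂)` decomposes
uniquely as a block sum `g₁ + f + g₂`, and the pullback of the middle inclusion
`Fin k → Fin (b₁+k+b₂)` along `h` is the middle inclusion `Fin n → Fin (a₁+n+a₂)`
together with `f`. -/
theorem block_decomposition (b₁ k b₂ n' : ℕ) (h : Fin n' → Fin (b₁ + k + b₂))
    (hmono : Monotone h) :
    ∃ (a₁ n a₂ : ℕ) (hsum : a₁ + n + a₂ = n')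
      (g₁ : Fin a₁ → Fin b₁) (f : Fin n → Fin k) (g₂ : Fin a₂ → Fin b₂),
      (Monotone g₁ ∧ Monotone f ∧ Monotone g₂) ∧
      (∀ (x : Fin n') (hx : (x : ℕ) < a₁), (h x : ℕ) = (g₁ ⟨(x : ℕ), hx⟩ : ℕ)) ∧
      (∀ (x : Fin n') (hx₁ : a₁ ≤ (x : ℕ)) (hx₂ : (x : ℕ) < a₁ + n),
        (h x : ℕ) = b₁ + (f ⟨(x : ℕ) - a₁, by omega⟩ : ℕ)) ∧
      (∀ (x : Fin n') (hx : a₁ + n ≤ (x : ℕ)),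
        (h x : ℕ) = b₁ + k + (g₂ ⟨(x : ℕ) - a₁ - n, by have := x.isLt; omega⟩ : ℕ)) ∧
      -- uniqueness of the block decomposition:
      (∀ (a₁' n₁ a₂' : ℕ) (hsum' : a₁' + n₁ + a₂' = n')
         (g₁' : Fin a₁' → Fin b₁) (f' : Fin n₁ → Fin k) (g₂' : Fin a₂' → Fin b₂),
        Monotone g₁' → Monotone f' → Monotone g₂' →
        (∀ (x : Fin n') (hx : (x : ℕ) < a₁'), (h x : ℕ) = (g₁' ⟨(x : ℕ), hx⟩ : ℕ)) →
        (∀ (x : Fin n') (hx₁ : a₁' ≤ (x : ℕ)) (hx₂ : (x : ℕ) < a₁' + n₁),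
          (h x : ℕ) = b₁ + (f' ⟨(x : ℕ) - a₁', by omega⟩ : ℕ)) →
        (∀ (x : Fin n') (hx : a₁' + n₁ ≤ (x : ℕ)),
          (h x : ℕ) = b₁ + k + (g₂' ⟨(x : ℕ) - a₁' - n₁, by have := x.isLt; omega⟩ : ℕ)) →
        a₁' = a₁ ∧ n₁ = n ∧ a₂' = a₂ ∧ HEq g₁' g₁ ∧ HEq f' f ∧ HEq g₂' g₂) ∧
      -- the pullback of the middle inclusion along h is the middle inclusion with f:
      (∀ x : Fin n, (h ⟨a₁ + (x : ℕ), by have := x.isLt; omega⟩ : ℕ) = b₁ + (f x : ℕ)) ∧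
      (∀ (c : ℕ) (p : Fin c → Fin n') (q : Fin c → Fin k), Monotone p → Monotone q →
        (∀ y : Fin c, (h (p y) : ℕ) = b₁ + (q y : ℕ)) →
        ∃! r : Fin c → Fin n, Monotone r ∧
          (∀ y : Fin c, (p y : ℕ) = a₁ + (r y : ℕ)) ∧ f ∘ r = q) := by
  classical
  set A := (univ.filter fun x : Fin n' => (h x : ℕ) < b₁).card with hA
  set B := (univ.filter fun x : Fin n' => (h x : ℕ) < b₁ + k).card with hB
  have hlow : ∀ (P : Fin n' → Prop), (∀ m, P m ↔ (h m : ℕ) < m.val + 0) → True := fun _ _ => trivial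
  have hmono' : ∀ x y : Fin n', x ≤ y → (h x : ℕ) ≤ (h y : ℕ) := fun x y hxy => hmono hxy
  have hchar₁ : ∀ x : Fin n', (h x : ℕ) < b₁ ↔ (x : ℕ) < A := fun x =>
    lower_iff_lt_card _ (fun x y hxy hy => lt_of_le_of_lt (hmono' x y hxy) hy) x
  have hchar₂ : ∀ x : Fin n', (h x : ℕ) < b₁ + k ↔ (x : ℕ) < B := fun x =>
    lower_iff_lt_card _ (fun x y hxy hy => lt_of_le_of_lt (hmono' x y hxy) hy) x
  have hAn : A ≤ n' := le_trans (Finset.card_filter_le _ _) (by simp)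
  have hBn : B ≤ n' := le_trans (Finset.card_filter_le _ _) (by simp)
  have hAB : A ≤ B := by
    by_contra hc
    push_neg at hc
    have h1 := (hchar₁ ⟨B, lt_of_lt_of_le hc hAn⟩).mpr hc
    have h2 : ¬ ((h ⟨B, lt_of_lt_of_le hc hAn⟩ : ℕ) < b₁ + k) := fun hh => by
      have := (hchar₂ _).mp hh
      simp at this
    omega
  -- value function on ℕ
  set v : ℕ → ℕ := fun m => if hm : m < n' then (h ⟨m, hm⟩ : ℕ) else 0 with hvdef
  have hveq : ∀ (m : ℕ) (hm : m < n'), v m = (h ⟨m, hm⟩ : ℕ) := fun m hm => dif_pos hm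
  have hv : ∀ x : Fin n', v (x : ℕ) = (h x : ℕ) := fun x => by
    rw [hveq _ x.isLt]
  have hchar₁' : ∀ (m : ℕ) (hm : m < n'), (v m < b₁ ↔ m < A) := by
    intro m hm
    rw [hveq m hm]
    exact hchar₁ ⟨m, hm⟩
  have hchar₂' : ∀ (m : ℕ) (hm : m < n'), (v m < b₁ + k ↔ m < B) := by
    intro m hm
    rw [hveq m hm]
    exact hchar₂ ⟨m, hm⟩
  have hvmono : ∀ m m' : ℕ, m ≤ m' → m' < n' → v m ≤ v m' := by
    intro m m' hle hm'
    have hm : m < n' := lt_of_le_of_lt hle hm'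
    rw [hveq m hm, hveq m' hm']
    exact hmono' _ _ (Fin.mk_le_mk.mpr hle)
  have hvbound : ∀ (m : ℕ), m < n' → v m < b₁ + k + b₂ := by
    intro m hm
    rw [hveq m hm]
    exact (h ⟨m, hm⟩).isLt
  have hfbound : ∀ i : Fin (B - A), b₁ ≤ v (A + (i : ℕ)) ∧ v (A + (i : ℕ)) < b₁ + k := by
    intro i
    have h1 : A + (i : ℕ) < n' := by have := i.isLt; omega
    have h2 := (hchar₂' _ h1).mpr (by have := i.isLt; omega)
    have h3 : ¬ (v (A + (i : ℕ)) < b₁) := fun hc => by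
      have := (hchar₁' _ h1).mp hc
      omega
    omega
  have hgbound : ∀ i : Fin (n' - B), b₁ + k ≤ v (B + (i : ℕ)) ∧ v (B + (i : ℕ)) < b₁ + k + b₂ := by
    intro i
    have h1 : B + (i : ℕ) < n' := by have := i.isLt; omega
    have h2 : ¬ (v (B + (i : ℕ)) < b₁ + k) := fun hc => by
      have := (hchar₂' _ h1).mp hc
      omega
    have h3 := hvbound _ h1
    omega
  refine ⟨A, B - A, n' - B, by omega,
    fun i => ⟨v (i : ℕ), (hchar₁' (i : ℕ) (lt_of_lt_of_le i.isLt hAn)).mpr i.isLt⟩,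
    fun i => ⟨v (A + (i : ℕ)) - b₁, by have := hfbound i; omega⟩,
    fun i => ⟨v (B + (i : ℕ)) - (b₁ + k), by have := hgbound i; omega⟩,
    ⟨?_, ?_, ?_⟩, ?_, ?_, ?_, ?_, ?_, ?_⟩
  · -- Monotone g₁
    intro i j hij
    exact Fin.mk_le_mk.mpr (hvmono _ _ hij (lt_of_lt_of_le j.isLt hAn))
  · -- Monotone f
    intro i j hij
    exact Fin.mk_le_mk.mpr (Nat.sub_le_sub_right
      (hvmono _ _ (Nat.add_le_add_left hij A) (by have := j.isLt; omega)) b₁)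
  · -- Monotone g₂
    intro i j hij
    exact Fin.mk_le_mk.mpr (Nat.sub_le_sub_right
      (hvmono _ _ (Nat.add_le_add_left hij B) (by have := j.isLt; omega)) (b₁ + k))
  · -- left block values
    intro x hx
    exact (hv x).symm
  · -- middle block values
    intro x hx₁ hx₂
    show (h x : ℕ) = b₁ + (v (A + ((x : ℕ) - A)) - b₁)
    rw [show A + ((x : ℕ) - A) = (x : ℕ) by omega, hv x]
    have h3 : ¬ ((h x : ℕ) < b₁) := fun hc => by
      have := (hchar₁ x).mp hc
      omega
    have h4 : (h x : ℕ) < b₁ + k := (hchar₂ x).mpr (by omega)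
    omega
  · -- right block values
    intro x hx
    show (h x : ℕ) = b₁ + k + (v (B + ((x : ℕ) - A - (B - A))) - (b₁ + k))
    rw [show B + ((x : ℕ) - A - (B - A)) = (x : ℕ) by omega, hv x]
    have h3 : ¬ ((h x : ℕ) < b₁ + k) := fun hc => by
      have := (hchar₂ x).mp hc
      omega
    have h4 := x.isLt
    have h5 := (h x).isLt
    omega
  · -- uniqueness
    intro a₁' n₁ a₂' hsum' g₁' f' g₂' m₁ m₂ m₃ p₁ p₂ p₃
    have q1 : ∀ x : Fin n', (x : ℕ) < a₁' ↔ (h x : ℕ) < b₁ := by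
      intro x
      constructor
      · intro hx
        have h1 := p₁ x hx
        have h2 := (g₁' ⟨(x : ℕ), hx⟩).isLt
        omega
      · intro hx
        by_contra hc
        push_neg at hc
        rcases Nat.lt_or_ge (x : ℕ) (a₁' + n₁) with h1 | h1
        · have := p₂ x hc h1
          omega
        · have := p₃ x h1
          omega
    have q2 : ∀ x : Fin n', (x : ℕ) < a₁' + n₁ ↔ (h x : ℕ) < b₁ + k := by
      intro x
      constructor
      · intro hx
        rcases Nat.lt_or_ge (x : ℕ) a₁' with h1 | h1
        · have h2 := p₁ x h1
          have h3 := (g₁' ⟨(x : ℕ), h1⟩).isLt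
          omega
        · have h2 := p₂ x h1 hx
          have h3 := (f' ⟨(x : ℕ) - a₁', by omega⟩).isLt
          omega
      · intro hx
        by_contra hc
        push_neg at hc
        have := p₃ x hc
        omega
    have e₁ : a₁' = A :=
      card_eq_of_iff_s7 (by omega) hAn (fun x => (q1 x).trans (hchar₁ x))
    have e₂ : a₁' + n₁ = B :=
      card_eq_of_iff_s7 (by omega) hBn (fun x => (q2 x).trans (hchar₂ x))
    have e₂' : n₁ = B - A := by omega
    have e₃ : a₂' = n' - B := by omega
    subst e₁
    subst e₂'
    subst e₃
    refine ⟨rfl, rfl, rfl, heq_of_eq ?_, heq_of_eq ?_, heq_of_eq ?_⟩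
    · funext i
      apply Fin.ext
      have hx : (i : ℕ) < n' := lt_of_lt_of_le i.isLt hAn
      have t1 := p₁ ⟨(i : ℕ), hx⟩ i.isLt
      show (g₁' i : ℕ) = v (i : ℕ)
      rw [hveq _ hx, t1]
    · funext i
      apply Fin.ext
      have hx : A + (i : ℕ) < n' := by have := i.isLt; omega
      have t1 := p₂ ⟨A + (i : ℕ), hx⟩ (by show A ≤ A + (i : ℕ); omega)
        (by show A + (i : ℕ) < A + (B - A); have := i.isLt; omega)
      have t2 : (⟨((⟨A + (i : ℕ), hx⟩ : Fin n') : ℕ) - A, by show A + (i : ℕ) - A < B - A; have := i.isLt; omega⟩ :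
          Fin (B - A)) = i := Fin.ext (by show A + (i : ℕ) - A = (i : ℕ); omega)
      rw [t2] at t1
      show (f' i : ℕ) = v (A + (i : ℕ)) - b₁
      rw [hveq _ hx, t1]
      omega
    · funext i
      apply Fin.ext
      have hx : B + (i : ℕ) < n' := by have := i.isLt; omega
      have t1 := p₃ ⟨B + (i : ℕ), hx⟩ (by show A + (B - A) ≤ B + (i : ℕ); omega)
      have t2 : (⟨((⟨B + (i : ℕ), hx⟩ : Fin n') : ℕ) - A - (B - A),
          by show B + (i : ℕ) - A - (B - A) < n' - B; have := i.isLt; omega⟩ : Fin (n' - B)) = i :=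
        Fin.ext (by show B + (i : ℕ) - A - (B - A) = (i : ℕ); omega)
      rw [t2] at t1
      show (g₂' i : ℕ) = v (B + (i : ℕ)) - (b₁ + k)
      rw [hveq _ hx, t1]
      omega
  · -- middle inclusion values
    intro x
    show (h ⟨A + (x : ℕ), _⟩ : ℕ) = b₁ + (v (A + (x : ℕ)) - b₁)
    rw [hveq (A + (x : ℕ)) (by have := x.isLt; omega)]
    have := hfbound x
    rw [hveq (A + (x : ℕ)) (by have := x.isLt; omega)] at this
    omega
  · -- pullback universal property
    intro c p q pmono qmono hpq
    have hrange : ∀ y : Fin c, A ≤ (p y : ℕ) ∧ (p y : ℕ) < B := by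
      intro y
      have h1 := hpq y
      have h2 : ¬ ((h (p y) : ℕ) < b₁) := by
        intro hc
        have := (q y).isLt
        omega
      have h3 : (h (p y) : ℕ) < b₁ + k := by have := (q y).isLt; omega
      constructor
      · by_contra hc
        push_neg at hc
        exact h2 ((hchar₁ _).mpr hc)
      · exact (hchar₂ _).mp h3
    refine ⟨fun y => ⟨(p y : ℕ) - A, by have := hrange y; omega⟩, ⟨?_, ?_, ?_⟩, ?_⟩
    · intro y z hyz
      have h1 : (p y : ℕ) ≤ (p z : ℕ) := pmono hyz
      have h2 := hrange y
      exact Fin.mk_le_mk.mpr (by omega)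
    · intro y
      have := hrange y
      show (p y : ℕ) = A + ((p y : ℕ) - A)
      omega
    · funext y
      apply Fin.ext
      show v (A + ((p y : ℕ) - A)) - b₁ = (q y : ℕ)
      rw [show A + ((p y : ℕ) - A) = ((p y) : ℕ) by have := hrange y; omega, hv (p y)]
      have := hpq y
      omega
    · intro r' hr'
      obtain ⟨hr'mono, hr'eq, hr'comp⟩ := hr'
      funext y
      apply Fin.ext
      have h1 := hr'eq y
      show (r' y : ℕ) = (p y : ℕ) - A
      omega
end

section
/- Let P be a partial order and n : ℕ. The map sending a monotone function ℓ : P → Fin (n+1) to the chain of lower sets L : Fin n → LowerSet P defined by L j = {p | (ℓ p : ℕ) ≤ (j : ℕ)} is a bijection between monotone maps P → Fin (n+1) and monotone maps Fin n → LowerSet P; its inverse sends a chain L to the map p ↦ the least j with p ∈ L j (and p ↦ n if p ∉ L j for all j). (An (n+1)-layering of a poset is the same as a chain of n lower sets; this is the object part of the equivalence Dec_⊥(C) ≃ N(C^lower).) -/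
section Aux
variable {P : Type*} [PartialOrder P] {n : ℕ}

private def layF (ℓ : P →o Fin (n + 1)) : Fin n →o LowerSet P where
  toFun j := ⟨{p | (ℓ p : ℕ) ≤ (j : ℕ)}, by
    intro a b hba ha
    exact le_trans ((Fin.le_def.mp (ℓ.mono hba))) ha⟩
  monotone' j k hjk p hp := le_trans (show ((ℓ p : ℕ)) ≤ (j : ℕ) from hp) hjk

private lemma mem_layF (ℓ : P →o Fin (n + 1)) (j : Fin n) (p : P) :
    p ∈ (layF ℓ) j ↔ (ℓ p : ℕ) ≤ (j : ℕ) := Iff.rfl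

private def layS (L : Fin n →o LowerSet P) (p : P) : Set ℕ :=
  {j : ℕ | ∃ hj : j < n, p ∈ L ⟨j, hj⟩} ∪ {n}

private lemma layS_ne (L : Fin n →o LowerSet P) (p : P) : (layS L p).Nonempty :=
  ⟨n, Or.inr rfl⟩

private lemma layS_lt (L : Fin n →o LowerSet P) (p : P) : sInf (layS L p) < n + 1 := by
  have := Nat.sInf_le (s := layS L p) (Or.inr rfl)
  omega

private noncomputable def layG (L : Fin n →o LowerSet P) : P →o Fin (n + 1) where
  toFun p := ⟨sInf (layS L p), layS_lt L p⟩
  monotone' p q hpq := by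
    show sInf (layS L p) ≤ sInf (layS L q)
    apply csInf_le_csInf (OrderBot.bddBelow _) (layS_ne L q)
    rintro j (⟨hj, hm⟩ | h)
    · exact Or.inl ⟨hj, (L ⟨j, hj⟩).lower hpq hm⟩
    · exact Or.inr h

private lemma layG_val (L : Fin n →o LowerSet P) (p : P) :
    ((layG L) p : ℕ) = sInf (layS L p) := rfl

private lemma mem_layF_layG (L : Fin n →o LowerSet P) (j : Fin n) (p : P) :
    p ∈ (layF (layG L)) j ↔ p ∈ L j := by
  rw [mem_layF, layG_val]
  constructor
  · intro h
    rcases Nat.sInf_mem (layS_ne L p) with ⟨hlt, hm⟩ | heq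
    · exact (L.mono (show (⟨_, hlt⟩ : Fin n) ≤ j from h)) hm
    · simp only [Set.mem_singleton_iff] at heq
      have := j.2; omega
  · intro h
    exact Nat.sInf_le (Or.inl ⟨j.2, by simpa using h⟩)

private lemma layG_layF (ℓ : P →o Fin (n + 1)) : layG (layF ℓ) = ℓ := by
  ext p
  rw [layG_val]
  apply le_antisymm
  · rcases lt_or_eq_of_le (Nat.lt_succ_iff.mp (ℓ p).2) with h | h
    · exact Nat.sInf_le (Or.inl ⟨h, by simp [mem_layF]⟩)
    · rw [h]; exact Nat.sInf_le (Or.inr rfl)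
  · apply le_csInf (layS_ne _ p)
    rintro b (⟨hb, hm⟩ | hb)
    · exact (mem_layF ℓ _ p).mp hm
    · simp only [Set.mem_singleton_iff] at hb
      have := Nat.lt_succ_iff.mp (ℓ p).2
      omega

end Aux

/-- An `(n+1)`-layering of a poset is the same thing as a chain of `n` lower
sets: the map sending a monotone `ℓ : P → Fin (n+1)` to the chain
`j ↦ {p | ℓ p ≤ j}` is a bijection, whose inverse sends a chain `L` to the map
taking `p` to the least `j` with `p ∈ L j` (and to `n` if there is no such `j`). -/
theorem layering_equiv_chain_of_lowerSets (P : Type*) [PartialOrder P] (n : ℕ) :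
    ∃ e : (P →o Fin (n + 1)) ≃ (Fin n →o LowerSet P),
      (∀ (ℓ : P →o Fin (n + 1)) (j : Fin n) (p : P),
        p ∈ (e ℓ) j ↔ (ℓ p : ℕ) ≤ (j : ℕ)) ∧
      (∀ (L : Fin n →o LowerSet P) (p : P),
        ((e.symm L) p : ℕ) = sInf ({j : ℕ | ∃ hj : j < n, p ∈ L ⟨j, hj⟩} ∪ {n})) := by
  refine ⟨⟨layF, layG, layG_layF, ?_⟩, fun ℓ j p => mem_layF ℓ j p, fun L p => layG_val L p⟩
  intro L
  ext j p
  exact mem_layF_layG L j p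
end

section
/- Let m n : ℕ. In the category FintypeCat of finite types, the functor from the core (maximal subgroupoid) of the slice category over Fin m ⊕ Fin n to the product of the cores of the slice categories over Fin m and over Fin n, sending an object f : A → Fin m ⊕ Fin n to the pair consisting of its restrictions f⁻¹(Sum.inl-part) → Fin m and f⁻¹(Sum.inr-part) → Fin n (the pullbacks of f along the two coproduct inclusions), is an equivalence of categories. (This is the Segal condition for the simplicial groupoid of layered finite sets: an (m+n)-layering of a finite set is the same as a pair of an m-layering and an n-layering.) -/
open CategoryTheory


universe v₁ v₂ u₁ u₂
variable {C : Type u₁} [Category.{v₁} C] {D : Type u₂} [Category.{v₂} D]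

def myCoreFunctor (F : C ⥤ D) : Core C ⥤ Core D :=
  Core.functorToCore (Core.inclusion C ⋙ F)

noncomputable def myCoreEquiv (E : C ≌ D) : Core C ≌ Core D :=
  CategoryTheory.Equivalence.mk (myCoreFunctor E.functor) (myCoreFunctor E.inverse)
    (NatIso.ofComponents
      (fun X => Core.isoMk (E.unitIso.app X.of))
      (fun {X Y} f => by
        apply Core.hom_ext
        exact E.unitIso.hom.naturality f.iso.hom))
    (NatIso.ofComponents
      (fun X => Core.isoMk (E.counitIso.app X.of))
      (fun {X Y} f => by
        apply Core.hom_ext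
        exact E.counitIso.hom.naturality f.iso.hom))

def coreProdFunctor : Core (C × D) ⥤ Core C × Core D where
  obj X := (⟨X.of.1⟩, ⟨X.of.2⟩)
  map {X Y} φ := (⟨⟨φ.iso.hom.1, φ.iso.inv.1, congrArg Prod.fst φ.iso.hom_inv_id,
        congrArg Prod.fst φ.iso.inv_hom_id⟩⟩,
      ⟨⟨φ.iso.hom.2, φ.iso.inv.2, congrArg Prod.snd φ.iso.hom_inv_id,
        congrArg Prod.snd φ.iso.inv_hom_id⟩⟩)
  map_id X := rfl
  map_comp f g := rfl

def coreProdInverse : Core C × Core D ⥤ Core (C × D) where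
  obj P := ⟨(P.1.of, P.2.of)⟩
  map {P Q} φ := ⟨⟨(φ.1.iso.hom, φ.2.iso.hom), (φ.1.iso.inv, φ.2.iso.inv),
      by apply Prod.ext <;> simp, by apply Prod.ext <;> simp⟩⟩
  map_id P := by apply Core.hom_ext; rfl
  map_comp f g := by apply Core.hom_ext; rfl

noncomputable def myCoreProd : Core (C × D) ≌ Core C × Core D :=
  CategoryTheory.Equivalence.mk coreProdFunctor coreProdInverse
    (NatIso.ofComponents (fun X => Iso.refl _) (fun {X Y} f => by
      apply Core.hom_ext; simp [coreProdFunctor, coreProdInverse]))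
    (NatIso.ofComponents (fun X => Iso.refl _) (fun {X Y} f => by
      refine Prod.ext ?_ ?_ <;> apply Core.hom_ext <;> simp [coreProdFunctor, coreProdInverse]))


section Slice

variable {α β : Type} [Fintype α] [Fintype β]

private lemma getL {x y : α ⊕ β} (h : x = y) {hx : x.isLeft} {hy : y.isLeft} :
    x.getLeft hx = y.getLeft hy := by subst h; rfl

private lemma getR {x y : α ⊕ β} (h : x = y) {hx : x.isRight} {hy : y.isRight} :
    x.getRight hx = y.getRight hy := by subst h; rfl

def sliceFunctor : Over (FintypeCat.of (α ⊕ β)) ⥤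
    Over (FintypeCat.of α) × Over (FintypeCat.of β) where
  obj Y := (Over.mk (X := FintypeCat.of α)
      (f := (FintypeCat.homMk (fun a => (Y.hom a.1).getLeft a.2) :
        FintypeCat.of {a : ↥Y.left // (Y.hom a).isLeft} ⟶ FintypeCat.of α)),
    Over.mk (X := FintypeCat.of β)
      (f := (FintypeCat.homMk (fun a => (Y.hom a.1).getRight a.2) :
        FintypeCat.of {a : ↥Y.left // (Y.hom a).isRight} ⟶ FintypeCat.of β)))
  map {Y Z} g :=
    (Over.homMk (f := FintypeCat.homMk fun a => ⟨g.left a.1,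
          (show Z.hom (g.left a.1) = Y.hom a.1 from ConcreteCategory.congr_hom (Over.w g) a.1).symm ▸ a.2⟩)
        (by refine FintypeCat.hom_ext _ _ fun a => ?_; exact getL (ConcreteCategory.congr_hom (Over.w g) a.1)),
     Over.homMk (f := FintypeCat.homMk fun a => ⟨g.left a.1,
          (show Z.hom (g.left a.1) = Y.hom a.1 from ConcreteCategory.congr_hom (Over.w g) a.1).symm ▸ a.2⟩)
        (by refine FintypeCat.hom_ext _ _ fun a => ?_; exact getR (ConcreteCategory.congr_hom (Over.w g) a.1)))
  map_id Y := by
    refine Prod.ext ?_ ?_ <;> apply Over.OverMorphism.ext <;> refine FintypeCat.hom_ext _ _ fun a => ?_ <;> rfl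
  map_comp f g := by
    refine Prod.ext ?_ ?_ <;> apply Over.OverMorphism.ext <;> refine FintypeCat.hom_ext _ _ fun a => ?_ <;> rfl

def invHom (P : Over (FintypeCat.of α) × Over (FintypeCat.of β)) :
    FintypeCat.of (↥P.1.left ⊕ ↥P.2.left) ⟶ FintypeCat.of (α ⊕ β) :=
  FintypeCat.homMk <| Sum.elim (fun u => Sum.inl (P.1.hom u)) (fun v => Sum.inr (P.2.hom v))

def invMap {P Q : Over (FintypeCat.of α) × Over (FintypeCat.of β)} (g : P ⟶ Q) :
    FintypeCat.of (↥P.1.left ⊕ ↥P.2.left) ⟶ FintypeCat.of (↥Q.1.left ⊕ ↥Q.2.left) :=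
  FintypeCat.homMk <| Sum.map g.1.left g.2.left

def sliceInverse : Over (FintypeCat.of α) × Over (FintypeCat.of β) ⥤
    Over (FintypeCat.of (α ⊕ β)) where
  obj P := Over.mk (invHom P)
  map {P Q} g := Over.homMk (f := invMap g)
    (by
      show invMap g ≫ invHom Q = invHom P
      refine FintypeCat.hom_ext _ _ fun x => ?_
      cases x with
      | inl u => exact congrArg Sum.inl (ConcreteCategory.congr_hom (Over.w g.1) u)
      | inr v => exact congrArg Sum.inr (ConcreteCategory.congr_hom (Over.w g.2) v))
  map_id P := by apply Over.OverMorphism.ext; refine FintypeCat.hom_ext _ _ fun x => ?_; cases x <;> rfl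
  map_comp f g := by apply Over.OverMorphism.ext; refine FintypeCat.hom_ext _ _ fun x => ?_; cases x <;> rfl

end Slice

section Slice2
variable {α β : Type} [Fintype α] [Fintype β]

def unitEquiv (Y : Over (FintypeCat.of (α ⊕ β))) :
    ↥Y.left ≃ ({a : ↥Y.left // (Y.hom a).isLeft} ⊕ {a : ↥Y.left // (Y.hom a).isRight}) where
  toFun a := if h : (Y.hom a).isLeft then .inl ⟨a, h⟩
    else .inr ⟨a, by simpa [Sum.not_isLeft] using h⟩
  invFun := Sum.elim Subtype.val Subtype.val
  left_inv a := by by_cases h : (Y.hom a).isLeft <;> simp [h]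
  right_inv x := by
    cases x with
    | inl p => simp [p.2]
    | inr p =>
      have h : ¬ (Y.hom p.1).isLeft = true := by simp [Sum.not_isLeft]; exact p.2
      simp [h]

def unitIsoApp (Y : Over (FintypeCat.of (α ⊕ β))) :
    Y ≅ (sliceFunctor ⋙ sliceInverse).obj Y :=
  Over.isoMk
    (FintypeCat.equivEquivIso (A := Y.left)
      (B := ((sliceFunctor ⋙ sliceInverse).obj Y).left) (unitEquiv Y))
    (by
      refine FintypeCat.hom_ext _ _ fun a => ?_
      show invHom (sliceFunctor.obj Y) (unitEquiv Y a) = Y.hom a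
      by_cases h : (Y.hom a).isLeft
      · simp only [unitEquiv, Equiv.coe_fn_mk, dif_pos h]
        exact Sum.inl_getLeft _ _
      · simp only [unitEquiv, Equiv.coe_fn_mk, dif_neg h]
        exact Sum.inr_getRight _ _)
end Slice2

section Slice3
variable {α β : Type} [Fintype α] [Fintype β]

def unitIso : 𝟭 (Over (FintypeCat.of (α ⊕ β))) ≅
    sliceFunctor ⋙ (sliceInverse : Over (FintypeCat.of α) × Over (FintypeCat.of β) ⥤ _) :=
  NatIso.ofComponents unitIsoApp (fun {Y Z} g => by
    apply Over.OverMorphism.ext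
    refine FintypeCat.hom_ext _ _ fun a => ?_
    have hw : Z.hom (g.left a) = Y.hom a := ConcreteCategory.congr_hom (Over.w g) a
    show unitEquiv Z (g.left a) = invMap (sliceFunctor.map g) (unitEquiv Y a)
    by_cases h : (Y.hom a).isLeft
    · have h' : (Z.hom (g.left a)).isLeft := hw.symm ▸ h
      simp only [unitEquiv, Equiv.coe_fn_mk, dif_pos h, dif_pos h']
      rfl
    · have h' : ¬ (Z.hom (g.left a)).isLeft = true := hw.symm ▸ h
      simp only [unitEquiv, Equiv.coe_fn_mk, dif_neg h, dif_neg h']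
      rfl)

def counitEquivL (P : Over (FintypeCat.of α) × Over (FintypeCat.of β)) :
    {x : ↥P.1.left ⊕ ↥P.2.left // (invHom P x).isLeft} ≃ ↥P.1.left where
  toFun p := p.1.getLeft (by
    obtain ⟨x, h⟩ := p
    cases x with
    | inl u => rfl
    | inr v => exact absurd h (by simp [sliceInverse, invHom]; rfl))
  invFun u := ⟨.inl u, rfl⟩
  left_inv p := Subtype.ext (by
    obtain ⟨x, h⟩ := p
    cases x with
    | inl u => rfl
    | inr v => exact absurd h (by simp [sliceInverse, invHom]; rfl))
  right_inv u := rfl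

def counitEquivR (P : Over (FintypeCat.of α) × Over (FintypeCat.of β)) :
    {x : ↥P.1.left ⊕ ↥P.2.left // (invHom P x).isRight} ≃ ↥P.2.left where
  toFun p := p.1.getRight (by
    obtain ⟨x, h⟩ := p
    cases x with
    | inr v => rfl
    | inl u => exact absurd h (by simp [sliceInverse, invHom]; rfl))
  invFun v := ⟨.inr v, rfl⟩
  left_inv p := Subtype.ext (by
    obtain ⟨x, h⟩ := p
    cases x with
    | inr v => rfl
    | inl u => exact absurd h (by simp [sliceInverse, invHom]; rfl))
  right_inv v := rfl

def counitL (P : Over (FintypeCat.of α) × Over (FintypeCat.of β)) :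
    ((sliceInverse ⋙ sliceFunctor).obj P).1 ≅ P.1 :=
  Over.isoMk
    (FintypeCat.equivEquivIso (A := ((sliceInverse ⋙ sliceFunctor).obj P).1.left)
      (B := P.1.left) (counitEquivL P))
    (by
      refine FintypeCat.hom_ext _ _ fun p => ?_
      show P.1.hom (counitEquivL P p) = _
      obtain ⟨x, h⟩ := p
      cases x with
      | inl u => rfl
      | inr v => exact absurd h (by simp [sliceInverse, invHom]; rfl))

def counitR (P : Over (FintypeCat.of α) × Over (FintypeCat.of β)) :
    ((sliceInverse ⋙ sliceFunctor).obj P).2 ≅ P.2 :=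
  Over.isoMk
    (FintypeCat.equivEquivIso (A := ((sliceInverse ⋙ sliceFunctor).obj P).2.left)
      (B := P.2.left) (counitEquivR P))
    (by
      refine FintypeCat.hom_ext _ _ fun p => ?_
      show P.2.hom (counitEquivR P p) = _
      obtain ⟨x, h⟩ := p
      cases x with
      | inr v => rfl
      | inl u => exact absurd h (by simp [sliceInverse, invHom]; rfl))

def isoPair {X₁ Y₁ : C} {X₂ Y₂ : D} (f : X₁ ≅ Y₁) (g : X₂ ≅ Y₂) :
    ((X₁, X₂) : C × D) ≅ (Y₁, Y₂) :=
  ⟨(f.hom, g.hom), (f.inv, g.inv), by apply Prod.ext <;> simp, by apply Prod.ext <;> simp⟩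

def counitIso : (sliceInverse : Over (FintypeCat.of α) × Over (FintypeCat.of β) ⥤ _)
      ⋙ sliceFunctor ≅ 𝟭 _ :=
  NatIso.ofComponents (fun P => isoPair (counitL P) (counitR P)) (fun {P Q} g => by
    refine Prod.ext ?_ ?_ <;> apply Over.OverMorphism.ext <;> refine FintypeCat.hom_ext _ _ fun p => ?_ <;>
      obtain ⟨x, h⟩ := p <;> cases x
    case inl u => rfl
    case inr v => exact absurd h (by simp [sliceInverse, invHom]; rfl)
    case inl u => exact absurd h (by simp [sliceInverse, invHom]; rfl)
    case inr v => rfl)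

noncomputable def overSumEquiv :
    Over (FintypeCat.of (α ⊕ β)) ≌ Over (FintypeCat.of α) × Over (FintypeCat.of β) :=
  CategoryTheory.Equivalence.mk sliceFunctor sliceInverse unitIso counitIso

end Slice3


/-- The Segal condition for the simplicial groupoid of layered finite sets: the
functor from the core of the slice of `FintypeCat` over `Fin m ⊕ Fin n` to the
product of the cores of the slices over `Fin m` and over `Fin n`, sending a
layering `f : A → Fin m ⊕ Fin n` to the pair of its restrictions (the pullbacks
of `f` along the two coproduct inclusions), is an equivalence of categories. -/
theorem layered_finite_sets_segal_condition (m n : ℕ) :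
    ∃ E : Core (Over (FintypeCat.of (Fin m ⊕ Fin n))) ≌
          Core (Over (FintypeCat.of (Fin m))) × Core (Over (FintypeCat.of (Fin n))),
      ∀ Y : Over (FintypeCat.of (Fin m ⊕ Fin n)),
        (E.functor.obj ⟨Y⟩).1.of = Over.mk (X := FintypeCat.of (Fin m))
            (f := (FintypeCat.homMk (fun a => (Y.hom a.1).getLeft a.2) :
              FintypeCat.of {a : ↥Y.left // (Y.hom a).isLeft} ⟶ FintypeCat.of (Fin m))) ∧
        (E.functor.obj ⟨Y⟩).2.of = Over.mk (X := FintypeCat.of (Fin n))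
            (f := (FintypeCat.homMk (fun a => (Y.hom a.1).getRight a.2) :
              FintypeCat.of {a : ↥Y.left // (Y.hom a).isRight} ⟶ FintypeCat.of (Fin n))) := by
  exact ⟨(myCoreEquiv overSumEquiv).trans myCoreProd, fun Y => ⟨rfl, rfl⟩⟩
end

section
/- Let f : Fin n → Fin k be monotone and a b : ℕ. Define g : Fin (a+n+b) → Fin (a+k+b) by (g x : ℕ) = x if (x : ℕ) < a, (g x : ℕ) = a + f(x − a) if a ≤ x < a + n, and (g x : ℕ) = x − n + k if a + n ≤ x. Let P' be a partial order and β : P' → Fin (a+k+b) a monotone map. Let P = {p : P' // a ≤ (β p : ℕ) ∧ (β p : ℕ) < a + k} with the induced order, and let α : P → Fin n be a monotone map satisfying a + (f (α p) : ℕ) = (β p : ℕ) for all p : P. Then there exists a unique monotone map γ : P' → Fin (a+n+b) such that g ∘ γ = β and (γ p : ℕ) = a + (α p : ℕ) for all p : P. (This is the strict-pullback property of layered posets that makes the comma projection ℂ ↓ Δ → Δ a iesq sesquicartesian fibration.) -/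
/-- The strict-pullback property of layered posets making the comma projection
`ℂ ↓ Δ → Δ` a iesq sesquicartesian fibration: given a `(a+k+b)`-layering `β` of
a poset `P'` and a refinement `α` of its middle part by an `n`-layering
compatible with `f`, there is a unique monotone `(a+n+b)`-layering `γ` of `P'`
with `(id_a + f + id_b) ∘ γ = β` restricting to `α` on the middle part. -/
theorem layered_poset_strict_pullback {n k : ℕ} (f : Fin n → Fin k)
    (hf : Monotone f) (a b : ℕ)
    {P' : Type*} [PartialOrder P'] (β : P' → Fin (a + k + b)) (hβ : Monotone β)
    (α : {p : P' // a ≤ (β p : ℕ) ∧ (β p : ℕ) < a + k} → Fin n) (hα : Monotone α)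
    (hcompat : ∀ p : {p : P' // a ≤ (β p : ℕ) ∧ (β p : ℕ) < a + k},
      a + (f (α p) : ℕ) = (β p.1 : ℕ)) :
    ∃! γ : P' → Fin (a + n + b), Monotone γ ∧ blockSum f a b ∘ γ = β ∧
      ∀ p : {p : P' // a ≤ (β p : ℕ) ∧ (β p : ℕ) < a + k},
        (γ p.1 : ℕ) = a + (α p : ℕ) := by
  classical
  refine ⟨fun p => if h1 : (β p : ℕ) < a then ⟨(β p : ℕ), by omega⟩
    else if h2 : (β p : ℕ) < a + k then
      ⟨a + (α ⟨p, by omega⟩ : ℕ), by have := (α ⟨p, by omega⟩).isLt; omega⟩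
    else ⟨(β p : ℕ) - k + n, by have := (β p).isLt; omega⟩,
    ⟨?_, ?_, ?_⟩, ?_⟩
  · -- monotone
    intro p q hpq
    have hb : (β p : ℕ) ≤ (β q : ℕ) := hβ hpq
    beta_reduce
    split_ifs with h1 h2 h3 h4 h5 h6 h7 h8 <;> rw [Fin.mk_le_mk]
    · omega
    · have := (α ⟨q, by omega⟩).isLt; omega
    · omega
    · omega
    · have hle : (α ⟨p, by omega⟩ : ℕ) ≤ (α ⟨q, by omega⟩ : ℕ) :=
        hα (show (⟨p, by omega⟩ : {p : P' // _}) ≤ ⟨q, by omega⟩ from hpq)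
      omega
    · have := (α ⟨p, by omega⟩).isLt; omega
    · omega
    · have := (α ⟨q, by omega⟩).isLt
      have := hcompat ⟨q, by omega⟩
      omega
    · omega
  · -- composition
    funext p
    simp only [Function.comp_apply]
    by_cases h1 : (β p : ℕ) < a
    · simp only [dif_pos h1]
      apply Fin.ext
      simp [blockSum, h1]
    · by_cases h2 : (β p : ℕ) < a + k
      · simp only [dif_neg h1, dif_pos h2]
        have hlt := (α ⟨p, by omega⟩).isLt
        apply Fin.ext
        simp only [blockSum]
        rw [dif_neg (by omega), dif_pos (by omega)]
        have : (⟨a + (α ⟨p, by omega⟩ : ℕ) - a, by omega⟩ : Fin n) = α ⟨p, by omega⟩ := by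
          apply Fin.ext; simp
        simp only [this]
        exact hcompat ⟨p, by omega⟩
      · simp only [dif_neg h1, dif_neg h2]
        apply Fin.ext
        simp only [blockSum]
        rw [dif_neg (by omega), dif_neg (by omega)]
        have := (β p).isLt
        show (β p : ℕ) - k + n - n + k = (β p : ℕ)
        omega
  · -- middle condition
    intro p
    obtain ⟨hp1, hp2⟩ := p.2
    simp only [dif_neg (by omega : ¬ (β p.1 : ℕ) < a), dif_pos hp2]
  · -- uniqueness
    intro γ' ⟨hmono, hcomp, hmid⟩
    funext p
    have hc : blockSum f a b (γ' p) = β p := congrFun hcomp p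
    apply Fin.ext
    by_cases h1 : (β p : ℕ) < a
    · simp only [dif_pos h1]
      by_cases hg1 : (γ' p : ℕ) < a
      · have : (blockSum f a b (γ' p) : ℕ) = (γ' p : ℕ) := by simp [blockSum, hg1]
        rw [hc] at this; omega
      · exfalso
        by_cases hg2 : (γ' p : ℕ) < a + n
        · have : (blockSum f a b (γ' p) : ℕ) = a + (f ⟨(γ' p : ℕ) - a, by omega⟩ : ℕ) := by
            simp [blockSum, hg1, hg2]
          rw [hc] at this; omega
        · have : (blockSum f a b (γ' p) : ℕ) = (γ' p : ℕ) - n + k := by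
            simp [blockSum, hg1, hg2]
          rw [hc] at this
          have := (γ' p).isLt
          omega
    · by_cases h2 : (β p : ℕ) < a + k
      · simp only [dif_neg h1, dif_pos h2]
        have := hmid ⟨p, by omega⟩
        rw [this]
      · simp only [dif_neg h1, dif_neg h2]
        by_cases hg1 : (γ' p : ℕ) < a
        · have : (blockSum f a b (γ' p) : ℕ) = (γ' p : ℕ) := by simp [blockSum, hg1]
          rw [hc] at this; omega
        · by_cases hg2 : (γ' p : ℕ) < a + n
          · exfalso
            have hlt := (f ⟨(γ' p : ℕ) - a, by omega⟩).isLt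
            have : (blockSum f a b (γ' p) : ℕ) = a + (f ⟨(γ' p : ℕ) - a, by omega⟩ : ℕ) := by
              simp [blockSum, hg1, hg2]
            rw [hc] at this; omega
          · have : (blockSum f a b (γ' p) : ℕ) = (γ' p : ℕ) - n + k := by
              simp [blockSum, hg1, hg2]
            rw [hc] at this
            omega
end
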